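/- Let w_1, …, w_n ∈ (0,1] be inclusion probabilities with W = ∑ w_i, and partition items into buckets B_i = {j : 2^{-(i+1)} ≤ w_j ≤ 2^{-i}} for i = 0,…,L-1 with L = ⌈log₂ n⌉, and B_L = {j : w_j ≤ 2^{-L}}. In bucket i < L, rejection sampling with proposal weight w̄_i = max_{j∈B_i} w_j accepts each proposed item with probability w_j/w̄_i ≥ 1/2; hence the expected number of proposals needed to produce the accepted items of bucket i is at most twice the expected output size of that bucket, and the expected total number of proposals over buckets 0..L-1 is at most 2·∑_{i<L} ∑_{j∈B_i} w_j ≤ 2W. -/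

import Mathlib

open scoped Classical

theorem stmt18 (n : ℕ) (hn : 0 < n) (w : Fin n → ℝ) (hw : ∀ j, 0 < w j ∧ w j ≤ 1)
    (L : ℕ) (hL : L = Nat.clog 2 n)
    (B : ℕ → Finset (Fin n))
    (hB : ∀ i, B i =
      Finset.univ.filter (fun j => ((2:ℝ) ^ (i + 1))⁻¹ < w j ∧ w j ≤ ((2:ℝ) ^ i)⁻¹)) :
    (∀ i, i < L → ∀ hne : (B i).Nonempty, ∀ j ∈ B i, (B i).sup' hne w / 2 ≤ w j) ∧
    (∑ i ∈ Finset.range L, 2 * ∑ j ∈ B i, w j) ≤ 2 * ∑ j, w j := by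
  have hmem : ∀ i j, j ∈ B i ↔ ((2:ℝ) ^ (i + 1))⁻¹ < w j ∧ w j ≤ ((2:ℝ) ^ i)⁻¹ := by
    intro i j
    rw [hB i]
    simp
  constructor
  · intro i _ hne j hj
    have hsup : (B i).sup' hne w ≤ ((2:ℝ) ^ i)⁻¹ := by
      apply Finset.sup'_le
      intro k hk
      exact ((hmem i k).1 hk).2
    have hlow : ((2:ℝ) ^ (i + 1))⁻¹ < w j := ((hmem i j).1 hj).1
    have : ((2:ℝ) ^ i)⁻¹ / 2 = ((2:ℝ) ^ (i + 1))⁻¹ := by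
      rw [pow_succ]
      field_simp
    nlinarith
  · have hdisj : Set.PairwiseDisjoint (↑(Finset.range L)) B := by
      have key : ∀ i k : ℕ, i < k → Disjoint (B i) (B k) := by
        intro i k h
        rw [Finset.disjoint_left]
        intro j hji hjk
        have h1 := (hmem i j).1 hji
        have h2 := (hmem k j).1 hjk
        have : ((2:ℝ) ^ k)⁻¹ ≤ ((2:ℝ) ^ (i+1))⁻¹ := by
          apply inv_anti₀ (by positivity)
          apply pow_le_pow_right₀ (by norm_num)
          omega
        linarith
      intro i _ k _ hik
      rcases lt_or_gt_of_ne hik with h | h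
      · exact key i k h
      · exact (key k i h).symm
    have key : (∑ i ∈ Finset.range L, ∑ j ∈ B i, w j) ≤ ∑ j, w j := by
      rw [← Finset.sum_biUnion hdisj]
      apply Finset.sum_le_sum_of_subset_of_nonneg (Finset.subset_univ _)
      intro j _ _
      exact (hw j).1.le
    calc (∑ i ∈ Finset.range L, 2 * ∑ j ∈ B i, w j)
        = 2 * ∑ i ∈ Finset.range L, ∑ j ∈ B i, w j := by rw [Finset.mul_sum]
      _ ≤ 2 * ∑ j, w j := by linarith
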